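/- arXiv:2603.15929 — 2 statements merged into one kernel-verified Lean document; each statement's English description precedes it below -/
import Mathlib

section
/- If b : R^3 -> R^3 is C^2, satisfies the Killing equation ∂_i b_j + ∂_j b_i = 0, and each component is periodic with period 1 in each coordinate, then b is constant. -/
noncomputable section

abbrev V3 := Fin 3 → ℝ

def pderiv (i : Fin 3) (F : V3 → ℝ) : V3 → ℝ :=
  fun x => fderiv ℝ F x (Pi.single i 1)

lemma clm_zero_of_basis (L : V3 →L[ℝ] ℝ) (h : ∀ i, L (Pi.single i 1) = 0) : L = 0 := by
  ext x
  have hx : x = ∑ i, x i • (Pi.single i 1 : V3) := by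
    conv_lhs => rw [← Finset.univ_sum_single x]
    congr 1; funext i
    rw [← Pi.single_smul, smul_eq_mul, mul_one]
  rw [hx]; simp [h]

/-- A `C²` Killing vector field on `ℝ³` that is `1`-periodic in each coordinate is constant. -/
theorem periodic_killing_field_constant (b : V3 → V3)
    (hb : ContDiff ℝ 2 b)
    (hKilling : ∀ (i j : Fin 3) (x : V3),
      pderiv i (fun y => b y j) x + pderiv j (fun y => b y i) x = 0)
    (hper : ∀ (x : V3) (i : Fin 3), b (x + Pi.single i 1) = b x) :
    ∃ b₀ : V3, ∀ x : V3, b x = b₀ := by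
  have hbc : ∀ j, ContDiff ℝ 2 (fun x => b x j) := fun j => contDiff_pi.mp hb j
  have hdiffF : ∀ j, Differentiable ℝ (fun x => b x j) :=
    fun j => (hbc j).differentiable two_ne_zero
  have hD1 : ∀ j, ContDiff ℝ 1 (fderiv ℝ (fun x => b x j)) :=
    fun j => (hbc j).fderiv_right (le_refl 2)
  have hDdiff : ∀ j, Differentiable ℝ (fderiv ℝ (fun x => b x j)) :=
    fun j => (hD1 j).differentiable one_ne_zero
  -- symmetry of second derivative
  have hsymm : ∀ j x (v w : V3),
      fderiv ℝ (fderiv ℝ (fun y => b y j)) x v w =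
      fderiv ℝ (fderiv ℝ (fun y => b y j)) x w v := by
    intro j x v w
    exact second_derivative_symmetric (fun y => (hdiffF j y).hasFDerivAt)
      (hDdiff j x).hasFDerivAt v w
  -- pderiv of pderiv in terms of second fderiv
  have hpp : ∀ j i k x, pderiv k (pderiv i (fun y => b y j)) x =
      fderiv ℝ (fderiv ℝ (fun y => b y j)) x (Pi.single k 1) (Pi.single i 1) := by
    intro j i k x
    have : pderiv i (fun y => b y j) = fun y => (fderiv ℝ (fun y => b y j) y) ((fun _ => (Pi.single i 1 : V3)) y) := rfl
    rw [pderiv, this, fderiv_clm_apply (hDdiff j x) (differentiableAt_const _)]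
    simp
  -- differentiate the Killing equation
  have hK' : ∀ i j k x,
      fderiv ℝ (fderiv ℝ (fun y => b y j)) x (Pi.single k 1) (Pi.single i 1) +
      fderiv ℝ (fderiv ℝ (fun y => b y i)) x (Pi.single k 1) (Pi.single j 1) = 0 := by
    intro i j k x
    have hg : (fun y => pderiv i (fun z => b z j) y + pderiv j (fun z => b z i) y)
        = (fun _ => (0:ℝ)) := funext (hKilling i j)
    have hgd1 : Differentiable ℝ (pderiv i (fun z => b z j)) := by
      exact (hDdiff j).clm_apply (differentiable_const _)
    have hgd2 : Differentiable ℝ (pderiv j (fun z => b z i)) := by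
      exact (hDdiff i).clm_apply (differentiable_const _)
    have h0 : fderiv ℝ (fun y => pderiv i (fun z => b z j) y + pderiv j (fun z => b z i) y) x = 0 := by
      rw [hg]; exact fderiv_const_apply 0
    rw [fderiv_fun_add (hgd1 x) (hgd2 x)] at h0
    have := congrArg (fun L => L (Pi.single k 1)) h0
    simp only [ContinuousLinearMap.add_apply, ContinuousLinearMap.zero_apply] at this
    rw [← hpp j i k x, ← hpp i j k x]
    exact this
  -- all second derivatives on basis vectors vanish
  have hzero : ∀ j i k x,
      fderiv ℝ (fderiv ℝ (fun y => b y j)) x (Pi.single k 1) (Pi.single i 1) = 0 := by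
    intro j i k x
    have h1 := hK' i j k x
    have h2 := hK' k i j x
    have h3 := hK' j k i x
    have s1 := hsymm i x (Pi.single k 1) (Pi.single j 1)
    have s2 := hsymm k x (Pi.single j 1) (Pi.single i 1)
    have s3 := hsymm j x (Pi.single i 1) (Pi.single k 1)
    linarith
  -- hence each pderiv i (b · j) is constant
  have hgconst : ∀ i j x, pderiv i (fun y => b y j) x = pderiv i (fun y => b y j) 0 := by
    intro i j x
    apply is_const_of_fderiv_eq_zero ((hDdiff j).clm_apply (differentiable_const _))
    intro y
    rw [fderiv_clm_apply (c := fderiv ℝ fun z => b z j) (u := fun _ => (Pi.single i 1 : V3))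
      (hDdiff j y) (differentiableAt_const _)]
    apply clm_zero_of_basis
    intro k
    simpa using hzero j i k y
  -- periodicity forces the constant to be zero
  have hgzero : ∀ i j x, pderiv i (fun y => b y j) x = 0 := by
    intro i j x
    set c := pderiv i (fun y => b y j) 0 with hc
    rw [hgconst i j x]
    set v : V3 := Pi.single i 1 with hv
    have hφ : ∀ t : ℝ, HasDerivAt (fun t : ℝ => b (t • v) j) c t := by
      intro t
      have h1 : HasDerivAt (fun t : ℝ => t • v) v t := by
        simpa using (hasDerivAt_id t).smul_const v
      have h2 := ((hdiffF j (t • v)).hasFDerivAt).comp_hasDerivAt t h1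
      have : fderiv ℝ (fun y => b y j) (t • v) v = c := hgconst i j (t • v)
      rwa [this] at h2
    have hψ : ∀ t : ℝ, HasDerivAt (fun t : ℝ => b (t • v) j - c * t) 0 t := by
      intro t
      have := (hφ t).sub ((hasDerivAt_id t).const_mul c)
      simp only [mul_one, sub_self] at this
      exact this
    have hconst : b ((1:ℝ) • v) j - c * 1 = b ((0:ℝ) • v) j - c * 0 :=
      is_const_of_deriv_eq_zero (fun t => (hψ t).differentiableAt)
        (fun t => (hψ t).deriv) 1 0
    have hper1 : b ((1:ℝ) • v) j = b ((0:ℝ) • v) j := by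
      rw [one_smul, zero_smul]
      have := hper 0 i
      rw [zero_add] at this
      rw [hv, this]
    simp only [hper1] at hconst
    linarith [hconst]
  -- hence each component is constant
  refine ⟨b 0, fun x => ?_⟩
  funext j
  apply is_const_of_fderiv_eq_zero (hdiffF j)
  intro y
  apply clm_zero_of_basis
  intro i
  exact hgzero i j y
end
end

section
/- Let f : R^3 -> R be positive and C^1 with ∇ log f having at most polynomial growth, and suppose that for Lebesgue-a.e. (equivalently, all, by continuity) pairs (v,w) the vector ∇log f(v) - ∇log f(w) is parallel to v - w. Then ∇ log f is an affine map of the specific form ∇log f(v) = b + 2c v for some b in R^3 and c in R; equivalently, log f(v) = a + b·v + c‖v‖² for some constants a, b, c. -/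
noncomputable section

abbrev E3 := EuclideanSpace ℝ (Fin 3)

/-- Algebraic core. -/
lemma parallel_core (s : E3 → Fin 3 → ℝ)
    (hpar : ∀ v w : E3, ∃ t : ℝ, ∀ i : Fin 3,
      s v i - s w i = t * (v i - w i)) :
    ∃ c' : ℝ, ∀ (v : E3) (i : Fin 3), s v i = s 0 i + c' * v i := by
  have h0 : ∀ v : E3, ∃ t : ℝ, ∀ i, s v i - s 0 i = t * v i := by
    intro v
    obtain ⟨t, ht⟩ := hpar v 0
    exact ⟨t, fun i => by simpa using ht i⟩
  choose tv htv using h0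
  -- key step
  have key : ∀ v u : E3, v ≠ 0 → u ∉ Submodule.span ℝ {v} → tv v = tv u := by
    intro v u hv hu
    obtain ⟨t, ht⟩ := hpar v u
    have heq : ∀ i, (tv v - t) * v i = (tv u - t) * u i := by
      intro i
      have h1 := htv v i
      have h2 := htv u i
      have h3 := ht i
      nlinarith [h1, h2, h3]
    by_cases hut : tv u = t
    · have hvz : ∀ i, (tv v - t) * v i = 0 := by
        intro i; rw [heq i, hut]; ring
      have : ∃ i, v i ≠ 0 := by
        by_contra h
        push_neg at h
        exact hv (by ext i; simp [h])
      obtain ⟨i, hi⟩ := this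
      have : tv v - t = 0 := by
        rcases mul_eq_zero.mp (hvz i) with h | h
        · exact h
        · exact absurd h hi
      rw [hut]; linarith
    · exfalso
      apply hu
      rw [Submodule.mem_span_singleton]
      refine ⟨(tv v - t) / (tv u - t), ?_⟩
      ext i
      have := heq i
      have hne : tv u - t ≠ 0 := sub_ne_zero.mpr hut
      simp only [PiLp.smul_apply, smul_eq_mul]
      field_simp
      linarith [heq i]
  -- existence of vector outside span of two vectors
  have exu : ∀ v w : E3, ∃ u : E3, u ∉ Submodule.span ℝ {v} ∧ u ∉ Submodule.span ℝ {w} := by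
    intro v w
    classical
    haveI : Fintype ({v, w} : Set E3) := Set.fintypeInsert v {w}
    have hlt : Submodule.span ℝ ({v, w} : Set E3) < ⊤ := by
      apply span_lt_top_of_card_lt_finrank
      have : ({v, w} : Set E3).toFinset.card ≤ 2 := by
        rw [Set.toFinset_insert, Set.toFinset_singleton]
        exact (Finset.card_insert_le _ _).trans (by simp)
      have h3 : Module.finrank ℝ E3 = 3 := finrank_euclideanSpace_fin
      omega
    have : ∃ u : E3, u ∉ Submodule.span ℝ ({v, w} : Set E3) := by
      by_contra h
      push_neg at h
      exact hlt.ne (Submodule.eq_top_iff'.mpr h)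
    obtain ⟨u, hu⟩ := this
    refine ⟨u, fun h => hu ?_, fun h => hu ?_⟩
    · exact Submodule.span_mono (by simp) h
    · exact Submodule.span_mono (by simp) h
  have const : ∀ v w : E3, v ≠ 0 → w ≠ 0 → tv v = tv w := by
    intro v w hv hw
    obtain ⟨u, hu1, hu2⟩ := exu v w
    rw [key v u hv hu1, ← key w u hw hu2]
  set e0 : E3 := EuclideanSpace.single 0 1 with he0
  have he0ne : e0 ≠ 0 := by
    intro h
    have : e0 (0 : Fin 3) = 0 := by rw [h]; rfl
    simp [he0, EuclideanSpace.single_apply] at this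
  refine ⟨tv e0, fun v i => ?_⟩
  by_cases hv : v = 0
  · subst hv; simp
  · rw [← const v e0 hv he0ne]
    have := htv v i
    linarith

/-- The gradient of `log f`, componentwise. -/
def scoreVec (f : E3 → ℝ) (v : E3) : Fin 3 → ℝ :=
  fun i => fderiv ℝ f v (EuclideanSpace.single i 1) / f v

/-- Null-space characterization: if `∇log f(v) - ∇log f(w)` is always parallel to
`v - w`, then `log f` is a quadratic `a + b·v + c‖v‖²` with isotropic quadratic part,
i.e. `∇log f(v) = b + 2cv`. -/
theorem score_differences_parallel_implies_quadratic (f : E3 → ℝ)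
    (hf_pos : ∀ v, 0 < f v)
    (hf_smooth : ContDiff ℝ 1 f)
    (hgrowth : ∃ (C : ℝ) (K : ℕ), ∀ (v : E3) (i : Fin 3),
      |scoreVec f v i| ≤ C * (1 + ‖v‖) ^ K)
    (hpar : ∀ v w : E3, ∃ t : ℝ, ∀ i : Fin 3,
      scoreVec f v i - scoreVec f w i = t * (v i - w i)) :
    ∃ (a : ℝ) (b : Fin 3 → ℝ) (c : ℝ),
      (∀ (v : E3) (i : Fin 3), scoreVec f v i = b i + 2 * c * v i) ∧
      (∀ v : E3, Real.log (f v) = a + (∑ i, b i * v i) + c * ‖v‖ ^ 2) := by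
  obtain ⟨c', hc'⟩ := parallel_core (scoreVec f) hpar
  set b : Fin 3 → ℝ := scoreVec f 0 with hb
  refine ⟨Real.log (f 0), b, c'/2, ?_, ?_⟩
  · intro v i
    rw [hc' v i]
    ring
  · -- analytic part
    have sc : ∀ (v : E3) (i : Fin 3), scoreVec f v i = b i + c' * v i := hc'
    have hdf : Differentiable ℝ f := hf_smooth.differentiable one_ne_zero
    have hg : ∀ v : E3, HasFDerivAt (fun v => Real.log (f v))
        ((f v)⁻¹ • fderiv ℝ f v) v := by
      intro v
      exact (Real.hasDerivAt_log (hf_pos v).ne').comp_hasFDerivAt v (hdf v).hasFDerivAt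
    have hsc : ∀ (v : E3) (i : Fin 3),
        ((f v)⁻¹ • fderiv ℝ f v) (EuclideanSpace.single i 1) = scoreVec f v i := by
      intro v i
      simp [scoreVec, div_eq_inv_mul]
    set q : E3 → ℝ := fun v => ∑ i, (b i * v i + (c'/2) * (v i * v i)) with hq
    have hqd : ∀ v : E3, HasFDerivAt q
        (∑ i, (b i + c' * v i) • (EuclideanSpace.proj i : E3 →L[ℝ] ℝ)) v := by
      intro v
      apply HasFDerivAt.fun_sum
      intro i _
      have hp : HasFDerivAt (fun v : E3 => v i)
          (EuclideanSpace.proj i : E3 →L[ℝ] ℝ) v := by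
        exact (EuclideanSpace.proj i : E3 →L[ℝ] ℝ).hasFDerivAt
      have := (hp.const_mul (b i)).add ((hp.mul hp).const_mul (c'/2))
      convert this using 1
      ext u
      simp [EuclideanSpace.proj]
      module
    set φ : E3 → ℝ := fun v => Real.log (f v) - q v with hφ
    have hφd : ∀ v : E3, HasFDerivAt φ (0 : E3 →L[ℝ] ℝ) v := by
      intro v
      have h := (hg v).sub (hqd v)
      refine h.congr_fderiv (Eq.symm ?_)
      symm
      have hext : ∀ i : Fin 3,
          ((f v)⁻¹ • fderiv ℝ f v - ∑ i, (b i + c' * v i) • (EuclideanSpace.proj i : E3 →L[ℝ] ℝ))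
            (EuclideanSpace.single i 1) = 0 := by
        intro i
        have h1 : ((f v)⁻¹ • fderiv ℝ f v) (EuclideanSpace.single i 1) = b i + c' * v i := by
          rw [hsc v i, sc v i]
        have h2 : (∑ j, (b j + c' * v j) • (EuclideanSpace.proj j : E3 →L[ℝ] ℝ))
            (EuclideanSpace.single i 1) = b i + c' * v i := by
          rw [ContinuousLinearMap.sum_apply]
          have : ∀ j : Fin 3, ((b j + c' * v j) • (EuclideanSpace.proj j : E3 →L[ℝ] ℝ))
              (EuclideanSpace.single i 1) = if i = j then b j + c' * v j else 0 := by
            intro j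
            by_cases h : i = j <;>
              simp [EuclideanSpace.proj, EuclideanSpace.single_apply, h, eq_comm]
          rw [Finset.sum_congr rfl (fun j _ => this j)]
          simp
        simp [ContinuousLinearMap.sub_apply, h1, h2]
      have hlin : ContinuousLinearMap.toLinearMap ((f v)⁻¹ • fderiv ℝ f v - ∑ i, (b i + c' * v i) • (EuclideanSpace.proj i : E3 →L[ℝ] ℝ)) = (0 : E3 →ₗ[ℝ] ℝ) := by
        apply (EuclideanSpace.basisFun (Fin 3) ℝ).toBasis.ext
        intro i
        rw [OrthonormalBasis.coe_toBasis, EuclideanSpace.basisFun_apply]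
        simpa using hext i
      exact ContinuousLinearMap.coe_injective (hlin.trans ContinuousLinearMap.coe_zero.symm)
    have hconst : ∀ v : E3, φ v = φ 0 :=
      fun v => is_const_of_fderiv_eq_zero (fun x => (hφd x).differentiableAt)
        (fun x => (hφd x).fderiv) v 0
    intro v
    have hv := hconst v
    have hq0 : q 0 = 0 := by simp [hq]
    have hnorm : ‖v‖^2 = ∑ i, v i * v i := by
      rw [EuclideanSpace.norm_eq, Real.sq_sqrt (by positivity)]
      simp [sq, Real.norm_eq_abs, abs_mul_abs_self]
    simp only [hφ, hq0, sub_zero] at hv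
    rw [hnorm]
    have hqv : q v = (∑ i, b i * v i) + (c'/2) * ∑ i, v i * v i := by
      simp only [hq]
      rw [Finset.sum_add_distrib, Finset.mul_sum]
    linarith [hv, hqv]
end
end
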